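/- Let λ > 0, Δ ≥ 0, and let α > 1 be a real number. Then ∫_ℝ (1/(2λ))·exp((−α·|x| + (α−1)·|x−Δ|)/λ) dx = (α/(2α−1))·exp((α−1)·Δ/λ) + ((α−1)/(2α−1))·exp(−α·Δ/λ). -/

import Mathlib

open MeasureTheory Real Set

lemma exp_int_Ioi (a b : ℝ) (hb : 0 < b) :
    ∫ x in Ioi a, Real.exp (-(b * x)) = Real.exp (-(b * a)) / b := by
  rw [integral_comp_mul_left_Ioi (fun x => Real.exp (-x)) a hb, integral_exp_neg_Ioi,
    smul_eq_mul]
  field_simp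

lemma exp_int_Iic (b : ℝ) (hb : 0 < b) :
    ∫ x in Iic (0 : ℝ), Real.exp (b * x) = 1 / b := by
  have h := integral_comp_neg_Iic (0 : ℝ) (fun y => Real.exp (-(b * y)))
  simp only [mul_neg, neg_neg, neg_zero] at h
  rw [h, exp_int_Ioi 0 b hb, mul_zero, neg_zero, Real.exp_zero]

lemma exp_integrableOn_Iic (b : ℝ) (hb : 0 < b) :
    IntegrableOn (fun x => Real.exp (b * x)) (Iic (0 : ℝ)) := by
  have h0 : IntegrableOn (fun x => Real.exp (-b * x)) (Ici (0 : ℝ)) :=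
    Iff.mpr integrableOn_Ici_iff_integrableOn_Ioi (exp_neg_integrableOn_Ioi 0 hb)
  have h1 : Integrable (Set.indicator (Ici (0 : ℝ)) fun x => Real.exp (-b * x)) volume :=
    (integrable_indicator_iff measurableSet_Ici).mpr h0
  have h2 := h1.comp_neg
  have h3 : (fun x => Set.indicator (Ici (0 : ℝ)) (fun x => Real.exp (-b * x)) (-x))
      = Set.indicator (Iic (0 : ℝ)) fun x => Real.exp (b * x) := by
    ext x
    simp only [Set.indicator_apply, Set.mem_Ici, Set.mem_Iic, Left.nonneg_neg_iff]
    by_cases hx : x ≤ 0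
    · rw [if_pos hx, if_pos hx]
      congr 1
      ring
    · rw [if_neg hx, if_neg hx]
  rw [h3] at h2
  exact (integrable_indicator_iff measurableSet_Iic).mp h2

theorem laplace_renyi_integral (lam Δ α : ℝ) (hlam : 0 < lam) (hΔ : 0 ≤ Δ) (hα : 1 < α) :
    (∫ x : ℝ, (1 / (2 * lam)) * Real.exp ((-α * |x| + (α - 1) * |x - Δ|) / lam)) =
      (α / (2 * α - 1)) * Real.exp ((α - 1) * Δ / lam) +
        ((α - 1) / (2 * α - 1)) * Real.exp (-α * Δ / lam) := by
  have hlam' : lam ≠ 0 := ne_of_gt hlam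
  have h2α : 2 * α - 1 ≠ 0 := by nlinarith
  set f : ℝ → ℝ := fun x => (1 / (2 * lam)) * Real.exp ((-α * |x| + (α - 1) * |x - Δ|) / lam)
    with hf
  set E1 := Real.exp ((α - 1) * Δ / lam) with hE1
  set E2 := Real.exp (-α * Δ / lam) with hE2
  -- pieces
  have heq1 : EqOn f (fun x => (1 / (2 * lam)) * E1 * Real.exp ((1 / lam) * x)) (Iic 0) := by
    intro x hx
    simp only [mem_Iic] at hx
    have h1 : |x| = -x := abs_of_nonpos hx
    have h2 : |x - Δ| = -(x - Δ) := abs_of_nonpos (by linarith)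
    simp only [hf, h1, h2, hE1, mul_assoc]
    rw [← Real.exp_add]
    congr 1
    field_simp
    ring
  have heq2 : EqOn f (fun x => (1 / (2 * lam)) * E1 *
      Real.exp (((1 - 2 * α) / lam) * x)) (Ioc 0 Δ) := by
    intro x hx
    simp only [mem_Ioc] at hx
    have h1 : |x| = x := abs_of_nonneg hx.1.le
    have h2 : |x - Δ| = -(x - Δ) := abs_of_nonpos (by linarith [hx.2])
    simp only [hf, h1, h2, hE1, mul_assoc]
    rw [← Real.exp_add]
    congr 1
    field_simp
    ring
  have heq3 : EqOn f (fun x => (1 / (2 * lam)) * Real.exp (-((α - 1) * Δ) / lam) *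
      Real.exp (-((1 / lam) * x))) (Ioi Δ) := by
    intro x hx
    simp only [mem_Ioi] at hx
    have h1 : |x| = x := abs_of_nonneg (by linarith)
    have h2 : |x - Δ| = x - Δ := abs_of_nonneg (by linarith)
    simp only [hf, h1, h2, mul_assoc]
    rw [← Real.exp_add]
    congr 1
    field_simp
    ring
  -- integrability
  have hcont : Continuous f := by
    apply Continuous.mul continuous_const
    exact Real.continuous_exp.comp (by fun_prop)
  have hint1 : IntegrableOn f (Iic 0) := by
    apply IntegrableOn.congr_fun _ heq1.symm measurableSet_Iic
    exact ((exp_integrableOn_Iic (1 / lam) (by positivity)).const_mul _)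
  have hint2 : IntegrableOn f (Ioc 0 Δ) :=
    hcont.integrableOn_Ioc
  have hint3 : IntegrableOn f (Ioi Δ) := by
    apply IntegrableOn.congr_fun _ heq3.symm measurableSet_Ioi
    have := (exp_neg_integrableOn_Ioi Δ (show (0:ℝ) < 1 / lam by positivity)).const_mul
      ((1 / (2 * lam)) * Real.exp (-((α - 1) * Δ) / lam))
    simpa [IntegrableOn, neg_mul, mul_assoc] using this
  have hintIoi : IntegrableOn f (Ioi 0) := by
    rw [← Ioc_union_Ioi_eq_Ioi hΔ]
    exact hint2.union hint3
  -- split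
  have hsplit : (∫ x : ℝ, f x) = (∫ x in Iic (0:ℝ), f x) + ∫ x in Ioi (0:ℝ), f x :=
    (intervalIntegral.integral_Iic_add_Ioi hint1 hintIoi).symm
  have hsplit2 : (∫ x in Ioi (0:ℝ), f x) = (∫ x in Ioc 0 Δ, f x) + ∫ x in Ioi Δ, f x := by
    rw [← Ioc_union_Ioi_eq_Ioi hΔ, setIntegral_union Ioc_disjoint_Ioi_same measurableSet_Ioi
      hint2 hint3]
  -- compute piece A
  have hA : (∫ x in Iic (0:ℝ), f x) = (1 / 2) * E1 := by
    rw [setIntegral_congr_fun measurableSet_Iic heq1, integral_const_mul,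
      exp_int_Iic (1 / lam) (by positivity)]
    field_simp
  -- compute piece B
  have hm : (1 - 2 * α) / lam ≠ 0 := by
    apply div_ne_zero _ hlam'
    intro h; apply h2α; linarith
  have hB : (∫ x in Ioc (0:ℝ) Δ, f x) =
      (1 / (2 * (2 * α - 1))) * (E1 - E2) := by
    rw [setIntegral_congr_fun measurableSet_Ioc heq2, integral_const_mul,
      ← intervalIntegral.integral_of_le hΔ]
    have key : ((1 - 2 * α) / lam) * ∫ x in (0:ℝ)..Δ, Real.exp (((1 - 2 * α) / lam) * x)
        = Real.exp (((1 - 2 * α) / lam) * Δ) - 1 := by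
      rw [intervalIntegral.mul_integral_comp_mul_left (f := Real.exp) ((1 - 2 * α) / lam),
        integral_exp]
      simp
    have hval : (∫ x in (0:ℝ)..Δ, Real.exp (((1 - 2 * α) / lam) * x))
        = (Real.exp (((1 - 2 * α) / lam) * Δ) - 1) / ((1 - 2 * α) / lam) := by
      rw [eq_div_iff hm, mul_comm]
      exact key
    rw [hval]
    set K := Real.exp (((1 - 2 * α) / lam) * Δ) with hKdef
    have hE : E1 * K = E2 := by
      rw [hE1, hE2, hKdef, ← Real.exp_add]
      congr 1
      field_simp
      ring
    have h12 : (1 - 2 * α) ≠ 0 := by intro h; apply h2α; linarith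
    field_simp
    linear_combination (2 * α - 1) * hE
  -- compute piece C
  have hC : (∫ x in Ioi Δ, f x) = (1 / 2) * E2 := by
    rw [setIntegral_congr_fun measurableSet_Ioi heq3, integral_const_mul,
      exp_int_Ioi Δ (1 / lam) (by positivity),
      show Real.exp (-(1 / lam * Δ)) / (1 / lam) = Real.exp (-(1 / lam * Δ)) * lam by
        field_simp]
    have hmul : Real.exp (-((α - 1) * Δ) / lam) * Real.exp (-(1 / lam * Δ)) = E2 := by
      rw [hE2, ← Real.exp_add]
      congr 1
      field_simp
      ring
    rw [show (1 / (2 * lam)) * Real.exp (-((α - 1) * Δ) / lam) *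
        (Real.exp (-(1 / lam * Δ)) * lam) =
        (Real.exp (-((α - 1) * Δ) / lam) * Real.exp (-(1 / lam * Δ))) * (lam / (2 * lam)) by
      ring, hmul, show lam / (2 * lam) = 1 / 2 by field_simp]
    ring
  rw [hsplit, hsplit2, hA, hB, hC]
  field_simp
  ring
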